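/- The function H : Θ → ℂ defined by H(η, ξ) = −(√3/6)·( Arg(R·e^{iξ} − 1) − Arg(u − conj(u₀)) + 2·⌈(ξ − π)/(2π)⌉·π + π/6 ) − (1/2)·ln( |u − u₀|·|u − conj(u₀)| ) + i·η/2, where R = e^{−√3(η+ξ)} and u = g(η, ξ), is injective on Θ. -/

import Mathlib

/-- The point `u₀ = (1 + √3 i)/2`. -/
noncomputable def u0 : ℂ := (1 + Real.sqrt 3 * Complex.I) / 2

/-- The map `g(η, ξ) = √3 i (R e^{iξ} − 1)/(1 − R²) + u₀` with `R = e^{−√3(η+ξ)}`. -/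
noncomputable def gexp (η ξ : ℝ) : ℂ :=
  (Real.sqrt 3 : ℂ) * Complex.I *
      (((Real.exp (-(Real.sqrt 3) * (η + ξ)) : ℝ) : ℂ) * Complex.exp (Complex.I * (ξ : ℂ)) - 1)
    / (1 - ((Real.exp (-(Real.sqrt 3) * (η + ξ)) : ℝ) : ℂ) ^ 2) + u0

/-- The function `H(η, ξ)` from the paper. -/
noncomputable def Hfun (p : ℝ × ℝ) : ℂ :=
  let η := p.1
  let ξ := p.2
  let R : ℝ := Real.exp (-(Real.sqrt 3) * (η + ξ))
  let u : ℂ := gexp η ξ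
  ((-(Real.sqrt 3 / 6) *
      (Complex.arg ((R : ℂ) * Complex.exp (Complex.I * (ξ : ℂ)) - 1)
        - Complex.arg (u - (starRingEnd ℂ) u0)
        + 2 * (⌈(ξ - Real.pi) / (2 * Real.pi)⌉ : ℤ) * Real.pi + Real.pi / 6)
    - Real.log (‖u - u0‖ * ‖u - (starRingEnd ℂ) u0‖) / 2 : ℝ) : ℂ)
    + Complex.I * (η : ℂ) / 2

/-- The trapezoid `Θ = {(η, ξ) : −π ≤ η ≤ 0, ξ < −η}`. -/
def Theta : Set (ℝ × ℝ) :=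
  {p : ℝ × ℝ | -Real.pi ≤ p.1 ∧ p.1 ≤ 0 ∧ p.2 < -p.1}


/-- `R(η,ξ) = e^{-√3(η+ξ)}`. -/
noncomputable def RR (η ξ : ℝ) : ℝ := Real.exp (-(Real.sqrt 3) * (η + ξ))

/-- A smooth closed form for the real part of `H`. -/
noncomputable def Gfun (η ξ : ℝ) : ℝ :=
  -(Real.sqrt 3 / 6) * ξ
    - Real.sqrt 3 / 3 * Real.arctan (Real.sin ξ / (RR η ξ - Real.cos ξ))
    + Real.sqrt 3 * Real.pi / 18 - Real.log 3 / 2 + Real.sqrt 3 * (η + ξ) / 2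
    - Real.log (RR η ξ ^ 2 - 2 * (RR η ξ * Real.cos ξ) + 1) / 2
    + Real.log (RR η ξ ^ 2 - 1)

lemma one_lt_RR {η ξ : ℝ} (h : ξ < -η) : 1 < RR η ξ := by
  have h3 : (0:ℝ) < Real.sqrt 3 := by positivity
  have : 0 < -(Real.sqrt 3) * (η + ξ) := by nlinarith
  calc (1:ℝ) = Real.exp 0 := Real.exp_zero.symm
  _ < RR η ξ := Real.exp_lt_exp.mpr this

lemma key_ineq (x y r : ℝ) (hr : r = x ^ 2 + y ^ 2) (h1 : 1 < r) :
    3 * x * (r + 1) - Real.sqrt 3 * y * (r - 1) < r ^ 2 + 4 * r + 1 := by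
  set t := Real.sqrt 3 with ht
  have hs : t ^ 2 = 3 := Real.sq_sqrt (by norm_num)
  have hM : 0 < r ^ 2 + 4 * r + 1 := by nlinarith
  have hid : (3 * x * (r + 1) - t * y * (r - 1)) ^ 2 + (3 * y * (r + 1) + t * x * (r - 1)) ^ 2
      = 12 * r * (r ^ 2 + r + 1) := by
    linear_combination ((x ^ 2 + y ^ 2) * (r - 1) ^ 2) * hs - (12 * r ^ 2 + 12 * r + 12) * hr
  have hT2 : (3 * x * (r + 1) - t * y * (r - 1)) ^ 2 ≤ 12 * r * (r ^ 2 + r + 1) := by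
    nlinarith [sq_nonneg (3 * y * (r + 1) + t * x * (r - 1))]
  have h4 : 0 < (r - 1) ^ 4 := pow_pos (by linarith) 4
  have hM2 : 12 * r * (r ^ 2 + r + 1) < (r ^ 2 + 4 * r + 1) ^ 2 := by nlinarith
  nlinarith [hT2, hM2, hM]

open Real in
lemma psi_beta_mem {R ψ : ℝ} (hR : 1 < R) (hψ₁ : -π < ψ) (hψ₂ : ψ ≤ π) :
    ψ + Real.arctan (Real.sin ψ / (R - Real.cos ψ)) ∈ Set.Ioc (-π) π := by
  have hπ : 0 < π := Real.pi_pos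
  have hc1 : Real.cos ψ ≤ 1 := Real.cos_le_one ψ
  have hRc : 0 < R - Real.cos ψ := by linarith
  constructor
  · by_cases hge : -(π / 2) ≤ ψ
    · have := Real.neg_pi_div_two_lt_arctan (Real.sin ψ / (R - Real.cos ψ))
      linarith
    · push_neg at hge
      have hsneg : Real.sin ψ < 0 := Real.sin_neg_of_neg_of_neg_pi_lt (by linarith) hψ₁
      have hcneg : Real.cos ψ < 0 := by
        rw [← Real.cos_neg]
        exact Real.cos_neg_of_pi_div_two_lt_of_lt (by linarith) (by linarith)
      have htan : Real.tan (-π - ψ) = Real.sin ψ / (-Real.cos ψ) := by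
        rw [show -π - ψ = -(ψ + π) by ring, Real.tan_neg, Real.tan_eq_sin_div_cos,
          Real.sin_add_pi, Real.cos_add_pi]
        ring
      have harct : Real.arctan (Real.sin ψ / (-Real.cos ψ)) = -π - ψ := by
        rw [← htan, Real.arctan_tan (by linarith) (by linarith)]
      have hmono : Real.arctan (Real.sin ψ / (-Real.cos ψ))
          < Real.arctan (Real.sin ψ / (R - Real.cos ψ)) := by
        apply Real.arctan_strictMono
        rw [div_lt_div_iff₀ (by linarith) hRc]
        nlinarith
      linarith
  · by_cases hle : ψ ≤ π / 2
    · have := Real.arctan_lt_pi_div_two (Real.sin ψ / (R - Real.cos ψ))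
      linarith
    · push_neg at hle
      have hs0 : 0 ≤ Real.sin ψ := Real.sin_nonneg_of_nonneg_of_le_pi (by linarith) hψ₂
      have hcneg : Real.cos ψ < 0 := Real.cos_neg_of_pi_div_two_lt_of_lt hle (by linarith)
      have htan : Real.tan (π - ψ) = Real.sin ψ / (-Real.cos ψ) := by
        rw [Real.tan_eq_sin_div_cos, Real.sin_pi_sub, Real.cos_pi_sub]
      have harct : Real.arctan (Real.sin ψ / (-Real.cos ψ)) = π - ψ := by
        rw [← htan, Real.arctan_tan (by linarith) (by linarith)]
      have hmono : Real.arctan (Real.sin ψ / (R - Real.cos ψ))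
          ≤ Real.arctan (Real.sin ψ / (-Real.cos ψ)) := by
        apply Real.arctan_strictMono.monotone
        rw [div_le_div_iff₀ hRc (by linarith)]
        nlinarith
      linarith

set_option maxHeartbeats 2000000 in
lemma deriv_neg_aux (t R c s : ℝ) (ht : t = Real.sqrt 3) (hcs : s ^ 2 + c ^ 2 = 1)
    (hc1 : c ≤ 1) (hR1 : 1 < R) :
    -(t / 6) - t / 3 * ((R * c - c ^ 2 + t * R * s - s ^ 2) / ((R - c) ^ 2 + s ^ 2)) + t / 2
      - (-2 * t * R ^ 2 + 2 * t * R * c + 2 * R * s) / (R ^ 2 - 2 * (R * c) + 1) / 2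
      + -2 * t * R ^ 2 / (R ^ 2 - 1) < 0 := by
  have ht0 : (0:ℝ) < t := by rw [ht]; positivity
  have hs3 : t ^ 2 = 3 := by rw [ht]; exact Real.sq_sqrt (by norm_num)
  have hRc : 0 < R - c := by linarith
  have hD1pos : 0 < (R - c) ^ 2 + s ^ 2 := by positivity
  have hNpos : 0 < R ^ 2 - 2 * (R * c) + 1 := by nlinarith [sq_nonneg s]
  have hr1 : 0 < R ^ 2 - 1 := by nlinarith
  have hkey := key_ineq (R * c) (R * s) (R ^ 2) (by linear_combination (-(R ^ 2)) * hcs)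
    (by nlinarith)
  rw [← ht] at hkey
  have hW : 3 * (R * c) * (R ^ 2 + 1) - t * (R * s) * (R ^ 2 - 1)
      - ((R ^ 2) ^ 2 + 4 * R ^ 2 + 1) < 0 := by linarith
  have hprod : (0:ℝ) < ((R - c) ^ 2 + s ^ 2) * ((R ^ 2 - 2 * (R * c) + 1) * (R ^ 2 - 1)) := by
    positivity
  have hmul : (-(t / 6) - t / 3 * ((R * c - c ^ 2 + t * R * s - s ^ 2) / ((R - c) ^ 2 + s ^ 2)) + t / 2
        - (-2 * t * R ^ 2 + 2 * t * R * c + 2 * R * s) / (R ^ 2 - 2 * (R * c) + 1) / 2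
        + -2 * t * R ^ 2 / (R ^ 2 - 1)) *
      (((R - c) ^ 2 + s ^ 2) * ((R ^ 2 - 2 * (R * c) + 1) * (R ^ 2 - 1)))
      = t / 3 * (((R - c) ^ 2 + s ^ 2) * ((R ^ 2 - 2 * (R * c) + 1) * (R ^ 2 - 1)))
        - t / 3 * ((R * c - c ^ 2 + t * R * s - s ^ 2) * ((R ^ 2 - 2 * (R * c) + 1) * (R ^ 2 - 1)))
        - (-2 * t * R ^ 2 + 2 * t * R * c + 2 * R * s) * (((R - c) ^ 2 + s ^ 2) * (R ^ 2 - 1)) / 2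
        - 2 * t * R ^ 2 * (((R - c) ^ 2 + s ^ 2) * (R ^ 2 - 2 * (R * c) + 1)) := by
    generalize (R - c) ^ 2 + s ^ 2 = D at hD1pos ⊢
    generalize R ^ 2 - 2 * (R * c) + 1 = N at hNpos ⊢
    generalize R ^ 2 - 1 = M at hr1 ⊢
    have := hNpos.ne'
    have := hD1pos.ne'
    have := hr1.ne'
    field_simp
    ring
  have hnum : t / 3 * (((R - c) ^ 2 + s ^ 2) * ((R ^ 2 - 2 * (R * c) + 1) * (R ^ 2 - 1)))
        - t / 3 * ((R * c - c ^ 2 + t * R * s - s ^ 2) * ((R ^ 2 - 2 * (R * c) + 1) * (R ^ 2 - 1)))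
        - (-2 * t * R ^ 2 + 2 * t * R * c + 2 * R * s) * (((R - c) ^ 2 + s ^ 2) * (R ^ 2 - 1)) / 2
        - 2 * t * R ^ 2 * (((R - c) ^ 2 + s ^ 2) * (R ^ 2 - 2 * (R * c) + 1))
      = 2 * t / 3 * (R ^ 2 - 2 * (R * c) + 1) *
        (3 * (R * c) * (R ^ 2 + 1) - t * (R * s) * (R ^ 2 - 1)
          - ((R ^ 2) ^ 2 + 4 * R ^ 2 + 1)) := by
    linear_combination (-(1/3 : ℝ) * R * s + (2/3) * R ^ 2 * c * s - (2/3) * R ^ 4 * c * s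
        + (1/3) * R ^ 5 * s) * hs3
      + (R * s - R ^ 3 * s - (2/3) * t + (7/3) * t * R * c - 3 * t * R ^ 2
        + (5/3) * t * R ^ 3 * c - (1/3) * t * R ^ 4) * hcs
  have hfin : 2 * t / 3 * (R ^ 2 - 2 * (R * c) + 1) *
      (3 * (R * c) * (R ^ 2 + 1) - t * (R * s) * (R ^ 2 - 1)
        - ((R ^ 2) ^ 2 + 4 * R ^ 2 + 1)) < 0 :=
    mul_neg_of_pos_of_neg (by positivity) hW
  by_contra hD
  push_neg at hD
  nlinarith [mul_nonneg hD hprod.le]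

lemma RR_hasDeriv (η ξ : ℝ) : HasDerivAt (fun x => RR η x) (-(Real.sqrt 3) * RR η ξ) ξ := by
  have h1 : HasDerivAt (fun x : ℝ => -(Real.sqrt 3) * (η + x)) (-(Real.sqrt 3)) ξ := by
    simpa using ((hasDerivAt_id ξ).const_add η).const_mul (-(Real.sqrt 3))
  have h2 := h1.exp
  simp only [RR]
  convert h2 using 1
  rw [mul_comm]

lemma Gfun_deriv_neg (η ξ : ℝ) (h : ξ < -η) :
    ∃ d, HasDerivAt (fun x => Gfun η x) d ξ ∧ d < 0 := by
  have ht0 : (0:ℝ) < Real.sqrt 3 := by positivity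
  have hR1 : 1 < RR η ξ := one_lt_RR h
  have hcs : Real.sin ξ ^ 2 + Real.cos ξ ^ 2 = 1 := Real.sin_sq_add_cos_sq ξ
  have hc1 : Real.cos ξ ≤ 1 := Real.cos_le_one ξ
  have hRc : 0 < RR η ξ - Real.cos ξ := by linarith
  have hD1pos : 0 < (RR η ξ - Real.cos ξ) ^ 2 + Real.sin ξ ^ 2 := by positivity
  have hNpos : 0 < RR η ξ ^ 2 - 2 * (RR η ξ * Real.cos ξ) + 1 := by
    nlinarith [sq_nonneg (Real.sin ξ)]
  have hr1 : 0 < RR η ξ ^ 2 - 1 := by nlinarith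
  have hRd := RR_hasDeriv η ξ
  -- quotient inside arctan
  have hq : HasDerivAt (fun x => Real.sin x / (RR η x - Real.cos x))
      ((Real.cos ξ * (RR η ξ - Real.cos ξ) -
        Real.sin ξ * (-(Real.sqrt 3) * RR η ξ + Real.sin ξ)) / (RR η ξ - Real.cos ξ) ^ 2) ξ := by
    have hden : HasDerivAt (fun x => RR η x - Real.cos x) (-(Real.sqrt 3) * RR η ξ + Real.sin ξ) ξ := by
      exact (hRd.sub (Real.hasDerivAt_cos ξ)).congr_deriv (by ring)
    exact (Real.hasDerivAt_sin ξ).div hden hRc.ne'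
  have harctan : HasDerivAt (fun x => Real.arctan (Real.sin x / (RR η x - Real.cos x)))
      ((RR η ξ * Real.cos ξ - Real.cos ξ ^ 2 + Real.sqrt 3 * RR η ξ * Real.sin ξ - Real.sin ξ ^ 2)
        / ((RR η ξ - Real.cos ξ) ^ 2 + Real.sin ξ ^ 2)) ξ := by
    have h1 := (Real.hasDerivAt_arctan (Real.sin ξ / (RR η ξ - Real.cos ξ))).comp ξ hq
    refine h1.congr_deriv ?_
    field_simp
    ring
  -- log terms
  have hlog1 : HasDerivAt (fun x => Real.log (RR η x ^ 2 - 2 * (RR η x * Real.cos x) + 1))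
      ((-2 * Real.sqrt 3 * RR η ξ ^ 2 + 2 * Real.sqrt 3 * RR η ξ * Real.cos ξ
        + 2 * RR η ξ * Real.sin ξ) / (RR η ξ ^ 2 - 2 * (RR η ξ * Real.cos ξ) + 1)) ξ := by
    have hNd : HasDerivAt (fun x => RR η x ^ 2 - 2 * (RR η x * Real.cos x) + 1)
        (-2 * Real.sqrt 3 * RR η ξ ^ 2 + 2 * Real.sqrt 3 * RR η ξ * Real.cos ξ
          + 2 * RR η ξ * Real.sin ξ) ξ := by
      have h1 := ((hRd.pow 2).sub ((hRd.mul (Real.hasDerivAt_cos ξ)).const_mul 2)).add_const 1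
      refine h1.congr_deriv ?_
      push_cast
      ring
    exact hNd.log hNpos.ne'
  have hlog2 : HasDerivAt (fun x => Real.log (RR η x ^ 2 - 1))
      (-2 * Real.sqrt 3 * RR η ξ ^ 2 / (RR η ξ ^ 2 - 1)) ξ := by
    have hMd : HasDerivAt (fun x => RR η x ^ 2 - 1) (-2 * Real.sqrt 3 * RR η ξ ^ 2) ξ := by
      have h1 := (hRd.pow 2).sub_const 1
      refine h1.congr_deriv ?_
      push_cast
      ring
    exact hMd.log hr1.ne'
  -- linear terms
  have hlin1 : HasDerivAt (fun x : ℝ => -(Real.sqrt 3 / 6) * x) (-(Real.sqrt 3 / 6)) ξ := by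
    simpa using (hasDerivAt_id ξ).const_mul (-(Real.sqrt 3 / 6))
  have hlin2 : HasDerivAt (fun x : ℝ => Real.sqrt 3 * (η + x) / 2) (Real.sqrt 3 / 2) ξ := by
    simpa using (((hasDerivAt_id ξ).const_add η).const_mul (Real.sqrt 3)).div_const 2
  have hG : HasDerivAt (fun x => Gfun η x)
      (-(Real.sqrt 3 / 6)
        - Real.sqrt 3 / 3 *
          ((RR η ξ * Real.cos ξ - Real.cos ξ ^ 2 + Real.sqrt 3 * RR η ξ * Real.sin ξ
            - Real.sin ξ ^ 2) / ((RR η ξ - Real.cos ξ) ^ 2 + Real.sin ξ ^ 2))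
        + Real.sqrt 3 / 2
        - (-2 * Real.sqrt 3 * RR η ξ ^ 2 + 2 * Real.sqrt 3 * RR η ξ * Real.cos ξ
            + 2 * RR η ξ * Real.sin ξ) / (RR η ξ ^ 2 - 2 * (RR η ξ * Real.cos ξ) + 1) / 2
        + -2 * Real.sqrt 3 * RR η ξ ^ 2 / (RR η ξ ^ 2 - 1)) ξ := by
    have h1 := (((((hlin1.sub (harctan.const_mul (Real.sqrt 3 / 3))).add_const
        (Real.sqrt 3 * Real.pi / 18)).sub_const (Real.log 3 / 2)).add hlin2).sub
        (hlog1.div_const 2)).add hlog2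
    have h2 : (fun x => Gfun η x) = (fun x : ℝ =>
        -(Real.sqrt 3 / 6) * x
          - Real.sqrt 3 / 3 * Real.arctan (Real.sin x / (RR η x - Real.cos x))
          + Real.sqrt 3 * Real.pi / 18 - Real.log 3 / 2 + Real.sqrt 3 * (η + x) / 2
          - Real.log (RR η x ^ 2 - 2 * (RR η x * Real.cos x) + 1) / 2
          + Real.log (RR η x ^ 2 - 1)) := by
      funext x
      simp only [Gfun]
    rw [h2]
    exact h1
  exact ⟨_, hG, deriv_neg_aux (Real.sqrt 3) (RR η ξ) (Real.cos ξ) (Real.sin ξ) rfl hcs hc1 hR1⟩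


lemma Gfun_strictAntiOn (η : ℝ) : StrictAntiOn (fun x => Gfun η x) (Set.Iio (-η)) := by
  apply strictAntiOn_of_deriv_neg (convex_Iio _)
  · intro x hx
    obtain ⟨d, hd, _⟩ := Gfun_deriv_neg η x hx
    exact hd.differentiableAt.continuousAt.continuousWithinAt
  · intro x hx
    rw [interior_Iio] at hx
    obtain ⟨d, hd, hneg⟩ := Gfun_deriv_neg η x hx
    rwa [hd.deriv]

set_option maxHeartbeats 2000000 in
lemma Hfun_eq (η ξ : ℝ) (h : ξ < -η) :
    Hfun (η, ξ) = ((Gfun η ξ : ℝ) : ℂ) + Complex.I * (η : ℂ) / 2 := by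
  have hRRdef : Real.exp (-(Real.sqrt 3) * (η + ξ)) = RR η ξ := rfl
  have ht0 : (0:ℝ) < Real.sqrt 3 := by positivity
  have hs3 : Real.sqrt 3 ^ 2 = 3 := Real.sq_sqrt (by norm_num)
  have hπ : 0 < Real.pi := Real.pi_pos
  have hR1 : 1 < RR η ξ := one_lt_RR h
  have hR0 : 0 < RR η ξ := by linarith
  have hr1 : 0 < RR η ξ ^ 2 - 1 := by nlinarith
  have hc1 : Real.cos ξ ≤ 1 := Real.cos_le_one ξ
  have hRc : 0 < RR η ξ - Real.cos ξ := by linarith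
  have hcs : Real.sin ξ ^ 2 + Real.cos ξ ^ 2 = 1 := Real.sin_sq_add_cos_sq ξ
  -- the auxiliary point ζ
  set ζ : ℂ := (RR η ξ : ℂ) - Complex.exp (-(Complex.I * (ξ:ℂ))) with hζdef
  have hζre : ζ.re = RR η ξ - Real.cos ξ := by
    simp [hζdef, Complex.exp_re, Complex.exp_im]
  have hζim : ζ.im = Real.sin ξ := by
    simp [hζdef, Complex.exp_re, Complex.exp_im]
  have hζre' : 0 < ζ.re := by rw [hζre]; exact hRc
  have hζ0 : ζ ≠ 0 := by
    intro h0
    rw [h0] at hζre'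
    simp at hζre'
  have habsζ : 0 < ‖ζ‖ := norm_pos_iff.mpr hζ0
  have hβabs : |Complex.arg ζ| < Real.pi / 2 :=
    Complex.abs_arg_lt_pi_div_two_iff.mpr (Or.inl hζre')
  have hβ := abs_lt.mp hβabs
  have hβ_eq : Complex.arg ζ = Real.arctan (Real.sin ξ / (RR η ξ - Real.cos ξ)) := by
    have h1 : Real.tan (Complex.arg ζ) = Real.sin ξ / (RR η ξ - Real.cos ξ) := by
      rw [Complex.tan_arg, hζre, hζim]
    rw [← h1, Real.arctan_tan hβ.1 hβ.2]
  -- the integer k and shifted angle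
  set k : ℤ := ⌈(ξ - Real.pi) / (2 * Real.pi)⌉ with hkdef
  have hk1 : ξ - Real.pi ≤ 2 * Real.pi * k := by
    have h1 := Int.le_ceil ((ξ - Real.pi) / (2 * Real.pi))
    rw [div_le_iff₀ (by positivity)] at h1
    linarith
  have hk2 : 2 * Real.pi * (k:ℝ) < ξ + Real.pi := by
    have h1 := Int.ceil_lt_add_one ((ξ - Real.pi) / (2 * Real.pi))
    have h2 : ((k:ℝ)) < (ξ - Real.pi) / (2 * Real.pi) + 1 := by exact_mod_cast h1
    have h3 : ((k:ℝ)) * (2 * Real.pi) < ((ξ - Real.pi) / (2 * Real.pi) + 1) * (2 * Real.pi) := by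
      exact mul_lt_mul_of_pos_right h2 (by positivity)
    rw [add_mul, div_mul_cancel₀ _ (by positivity : (2:ℝ) * Real.pi ≠ 0)] at h3
    linarith
  have hψ₁ : -Real.pi < ξ - 2 * Real.pi * k := by linarith
  have hψ₂ : ξ - 2 * Real.pi * k ≤ Real.pi := by linarith
  have hcosψ : Real.cos (ξ - 2 * Real.pi * k) = Real.cos ξ := by
    rw [show ξ - 2 * Real.pi * (k:ℝ) = ξ + (-k : ℤ) * (2 * Real.pi) by push_cast; ring,
      Real.cos_add_int_mul_two_pi]
  have hsinψ : Real.sin (ξ - 2 * Real.pi * k) = Real.sin ξ := by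
    rw [show ξ - 2 * Real.pi * (k:ℝ) = ξ + (-k : ℤ) * (2 * Real.pi) by push_cast; ring,
      Real.sin_add_int_mul_two_pi]
  have hmem : (ξ - 2 * Real.pi * k) + Complex.arg ζ ∈ Set.Ioc (-Real.pi) Real.pi := by
    have h1 := psi_beta_mem hR1 hψ₁ hψ₂
    rwa [hcosψ, hsinψ, ← hβ_eq] at h1
  -- exponential periodicity
  have hexpk : Complex.exp (Complex.I * (ξ:ℂ))
      = Complex.exp (Complex.I * ((ξ - 2 * Real.pi * k : ℝ):ℂ)) := by
    rw [show Complex.I * (ξ:ℂ)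
        = Complex.I * ((ξ - 2 * Real.pi * k : ℝ):ℂ) + (k:ℂ) * (2 * (Real.pi:ℂ) * Complex.I) by
      push_cast; ring, Complex.exp_add, Complex.exp_int_mul_two_pi_mul_I, mul_one]
  have hζpolar : ζ = (‖ζ‖ : ℂ) * Complex.exp ((Complex.arg ζ : ℂ) * Complex.I) :=
    (Complex.norm_mul_exp_arg_mul_I ζ).symm
  -- factorization of w - 1
  have hw1 : (RR η ξ : ℂ) * Complex.exp (Complex.I * (ξ:ℂ)) - 1
      = (‖ζ‖ : ℂ) *
        Complex.exp ((((ξ - 2 * Real.pi * k) + Complex.arg ζ : ℝ):ℂ) * Complex.I) := by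
    have he1 : Complex.exp (Complex.I * ((ξ - 2 * Real.pi * k : ℝ):ℂ))
        * Complex.exp (-(Complex.I * (ξ:ℂ))) = 1 := by
      rw [← Complex.exp_add, show Complex.I * ((ξ - 2 * Real.pi * k : ℝ):ℂ) + -(Complex.I * (ξ:ℂ))
          = ((-k:ℤ):ℂ) * (2 * (Real.pi:ℂ) * Complex.I) by push_cast; ring,
        Complex.exp_int_mul_two_pi_mul_I]
    have hstep : (RR η ξ : ℂ) * Complex.exp (Complex.I * (ξ:ℂ)) - 1
        = Complex.exp (Complex.I * ((ξ - 2 * Real.pi * k : ℝ):ℂ)) * ζ := by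
      rw [hζdef, mul_sub, he1, ← hexpk]
      ring
    rw [hstep]
    conv_lhs => rw [hζpolar]
    rw [show Complex.exp (Complex.I * ((ξ - 2 * Real.pi * k : ℝ):ℂ)) *
        ((‖ζ‖ : ℂ) * Complex.exp ((Complex.arg ζ : ℂ) * Complex.I))
        = (‖ζ‖ : ℂ) * (Complex.exp (Complex.I * ((ξ - 2 * Real.pi * k : ℝ):ℂ)) *
          Complex.exp ((Complex.arg ζ : ℂ) * Complex.I)) by ring, ← Complex.exp_add]
    congr 2
    push_cast
    ring
  have hargw : Complex.arg ((RR η ξ : ℂ) * Complex.exp (Complex.I * (ξ:ℂ)) - 1)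
      = (ξ - 2 * Real.pi * k) + Complex.arg ζ := by
    rw [hw1, Complex.arg_real_mul _ habsζ, Complex.exp_mul_I]
    exact Complex.arg_cos_add_sin_mul_I hmem
  -- u identities
  have hden1 : ((1:ℂ) - (RR η ξ:ℂ) ^ 2) ≠ 0 := by
    rw [show ((1:ℂ) - (RR η ξ:ℂ) ^ 2) = ((1 - RR η ξ ^ 2 : ℝ):ℂ) by push_cast; ring]
    rw [Complex.ofReal_ne_zero]
    nlinarith
  have hden2 : ((RR η ξ:ℂ) ^ 2 - 1) ≠ 0 := by
    rw [show ((RR η ξ:ℂ) ^ 2 - 1) = ((RR η ξ ^ 2 - 1 : ℝ):ℂ) by push_cast; ring]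
    rw [Complex.ofReal_ne_zero]
    nlinarith
  have hu_u0 : gexp η ξ - u0
      = (Real.sqrt 3 : ℂ) * Complex.I * ((RR η ξ:ℂ) * Complex.exp (Complex.I * (ξ:ℂ)) - 1)
        / (1 - (RR η ξ:ℂ) ^ 2) := by
    rw [gexp, hRRdef]
    ring
  have hconj_u0 : (starRingEnd ℂ) u0 = u0 - (Real.sqrt 3:ℂ) * Complex.I := by
    rw [u0]
    rw [map_div₀, map_add, map_one, map_mul, Complex.conj_ofReal, Complex.conj_I, map_ofNat]
    ring
  have hconjζ : (starRingEnd ℂ) ζ = (RR η ξ:ℂ) - Complex.exp (Complex.I * (ξ:ℂ)) := by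
    have h1 : (starRingEnd ℂ) (-(Complex.I * (ξ:ℂ))) = Complex.I * (ξ:ℂ) := by
      simp
    rw [hζdef, map_sub, Complex.conj_ofReal, ← Complex.exp_conj, h1]
  have hu_cu0 : gexp η ξ - (starRingEnd ℂ) u0
      = ((Real.sqrt 3 * RR η ξ / (RR η ξ ^ 2 - 1) : ℝ):ℂ) * (Complex.I * (starRingEnd ℂ) ζ) := by
    rw [hconj_u0, hconjζ, gexp, hRRdef]
    push_cast
    field_simp
    ring
  have hNpos : 0 < RR η ξ ^ 2 - 2 * (RR η ξ * Real.cos ξ) + 1 := by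
    nlinarith [sq_nonneg (Real.sin ξ)]
  have hcoef : (0:ℝ) < Real.sqrt 3 * RR η ξ / (RR η ξ ^ 2 - 1) := by positivity
  -- `I * conj ζ` in polar form
  have hI2 : Complex.I * (starRingEnd ℂ) ζ
      = (‖ζ‖ : ℂ) * (↑(Real.cos (Real.pi / 2 - Complex.arg ζ))
        + ↑(Real.sin (Real.pi / 2 - Complex.arg ζ)) * Complex.I) := by
    have hre := Complex.cos_arg hζ0
    have him := Complex.sin_arg ζ
    apply Complex.ext
    · simp only [Complex.mul_re, Complex.I_re, Complex.I_im, Complex.conj_re, Complex.conj_im,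
        Complex.add_re, Complex.add_im, Complex.ofReal_re, Complex.ofReal_im,
        Complex.mul_im, Real.cos_pi_div_two_sub]
      rw [him]
      field_simp
      ring
    · simp only [Complex.mul_re, Complex.I_re, Complex.I_im, Complex.conj_re, Complex.conj_im,
        Complex.add_re, Complex.add_im, Complex.ofReal_re, Complex.ofReal_im,
        Complex.mul_im, Real.sin_pi_div_two_sub]
      rw [hre]
      field_simp
      ring
  have hmem2 : Real.pi / 2 - Complex.arg ζ ∈ Set.Ioc (-Real.pi) Real.pi :=
    ⟨by linarith [hβ.2], by linarith [hβ.1]⟩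
  have hargu : Complex.arg (gexp η ξ - (starRingEnd ℂ) u0) = Real.pi / 2 - Complex.arg ζ := by
    rw [hu_cu0, hI2, ← mul_assoc, ← Complex.ofReal_mul, Complex.arg_real_mul _
      (by positivity), Complex.ofReal_cos, Complex.ofReal_sin,
      Complex.arg_cos_add_sin_mul_I hmem2]
  -- absolute values
  have habs1 : ‖gexp η ξ - u0‖
      = Real.sqrt 3 * ‖ζ‖ / (RR η ξ ^ 2 - 1) := by
    rw [hu_u0, hw1, show ((1:ℂ) - (RR η ξ:ℂ) ^ 2) = ((1 - RR η ξ ^ 2 : ℝ):ℂ) by push_cast; ring]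
    simp only [norm_div, norm_mul, Complex.norm_real, Real.norm_eq_abs, Complex.norm_I,
      Complex.norm_exp_ofReal_mul_I]
    rw [abs_of_pos ht0, abs_of_pos habsζ, abs_of_nonpos (by nlinarith : 1 - RR η ξ ^ 2 ≤ 0)]
    field_simp
    rw [neg_div', div_eq_one_iff_eq (by nlinarith)]
    ring
  have habs2 : ‖gexp η ξ - (starRingEnd ℂ) u0‖
      = Real.sqrt 3 * RR η ξ * ‖ζ‖ / (RR η ξ ^ 2 - 1) := by
    rw [hu_cu0]
    simp only [norm_mul, Complex.norm_real, Real.norm_eq_abs, Complex.norm_I, Complex.norm_conj]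
    rw [abs_of_pos hcoef]
    field_simp
  have habsζsq : ‖ζ‖ ^ 2 = RR η ξ ^ 2 - 2 * (RR η ξ * Real.cos ξ) + 1 := by
    rw [Complex.sq_norm, Complex.normSq_apply, hζre, hζim]
    linear_combination hcs
  have habsprod : ‖gexp η ξ - u0‖ * ‖gexp η ξ - (starRingEnd ℂ) u0‖
      = 3 * RR η ξ * (RR η ξ ^ 2 - 2 * (RR η ξ * Real.cos ξ) + 1) / (RR η ξ ^ 2 - 1) ^ 2 := by
    rw [habs1, habs2, div_mul_div_comm]
    congr 1
    · linear_combination (RR η ξ * ‖ζ‖ ^ 2) * hs3 + 3 * RR η ξ * habsζsq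
    · ring
  have hlogprod : Real.log (3 * RR η ξ * (RR η ξ ^ 2 - 2 * (RR η ξ * Real.cos ξ) + 1)
        / (RR η ξ ^ 2 - 1) ^ 2)
      = Real.log 3 + (-(Real.sqrt 3) * (η + ξ))
        + Real.log (RR η ξ ^ 2 - 2 * (RR η ξ * Real.cos ξ) + 1)
        - 2 * Real.log (RR η ξ ^ 2 - 1) := by
    rw [Real.log_div (by positivity) (by positivity),
      Real.log_mul (by positivity) hNpos.ne', Real.log_mul (by norm_num) hR0.ne',
      Real.log_pow, show Real.log (RR η ξ) = -(Real.sqrt 3) * (η + ξ) from Real.log_exp _]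
    push_cast
    ring
  -- final assembly
  simp only [Hfun]
  rw [hRRdef, ← hkdef, hargw, hargu, habsprod, hlogprod, hβ_eq]
  congr 1
  rw [Complex.ofReal_inj]
  simp only [Gfun]
  ring


/-- `H` is injective on `Θ`. -/
theorem Hfun_injOn : Set.InjOn Hfun Theta := by
  rintro ⟨η₁, ξ₁⟩ ⟨hη₁a, hη₁b, hξ₁⟩ ⟨η₂, ξ₂⟩ ⟨hη₂a, hη₂b, hξ₂⟩ heq
  simp only at hξ₁ hξ₂
  rw [Hfun_eq η₁ ξ₁ hξ₁, Hfun_eq η₂ ξ₂ hξ₂] at heq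
  have him : η₁ = η₂ := by
    have h1 := congrArg Complex.im heq
    simp [Complex.add_im, Complex.ofReal_im, Complex.mul_im, Complex.div_im] at h1
    linarith
  subst him
  have hre : Gfun η₁ ξ₁ = Gfun η₁ ξ₂ := by
    have h1 := congrArg Complex.re heq
    simpa using h1
  have hξ : ξ₁ = ξ₂ := (Gfun_strictAntiOn η₁).injOn hξ₁ hξ₂ hre
  rw [hξ]
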